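/- Let V be a finite set, f : 2^V → ℝ a nonnegative submodular function, and A ⊆ V a fixed set. Let B be a random subset of V ∖ A such that every element e ∈ V ∖ A belongs to B with probability at most p, where p ∈ [0,1]. Then E[f(A ∪ B)] ≥ (1 − p)·f(A). -/
import Mathlib

private lemma pair_sum {V : Type*} [Fintype V] [DecidableEq V] (e : V) (F : Finset V → ℝ) :
    ∑ S : Finset V, F S
      = ∑ T ∈ Finset.univ.filter (fun T : Finset V => e ∉ T), (F T + F (insert e T)) := by
  rw [Finset.sum_add_distrib]
  have h1 : ∑ T ∈ Finset.univ.filter (fun T : Finset V => e ∉ T), F (insert e T)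
      = ∑ S ∈ Finset.univ.filter (fun S : Finset V => e ∈ S), F S := by
    refine Finset.sum_nbij' (i := fun T => insert e T) (j := fun S => S.erase e) ?_ ?_ ?_ ?_ ?_ <;>
      intros a ha <;> simp_all [Finset.erase_insert, Finset.insert_erase]
  rw [h1, add_comm, Finset.sum_filter_add_sum_filter_not]

private lemma aux_main {V : Type*} [Fintype V] [DecidableEq V]
    (f : Finset V → ℝ)
    (hf_nonneg : ∀ S : Finset V, 0 ≤ f S)
    (hf_submod : ∀ X Y : Finset V, X ⊆ Y → ∀ e ∉ Y,
      f (insert e Y) - f Y ≤ f (insert e X) - f X)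
    (A : Finset V) (p : ℝ) (hp0 : 0 ≤ p) :
    ∀ W : Finset V, W ⊆ Aᶜ →
      ∀ μ : Finset V → ℝ, (∀ S, 0 ≤ μ S) → (∑ S : Finset V, μ S = 1) →
      (∀ S, μ S ≠ 0 → S ⊆ W) →
      (∀ e ∈ W, ∑ S ∈ Finset.univ.filter (fun S : Finset V => e ∈ S), μ S ≤ p) →
      ∀ q : ℝ, 0 ≤ q → q ≤ p →
      (∀ e ∈ W, q ≤ ∑ S ∈ Finset.univ.filter (fun S : Finset V => e ∈ S), μ S) →
      (1 - p) * f A + q * f (A ∪ W) ≤ ∑ S : Finset V, μ S * f (A ∪ S) := by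
  intro W
  induction W using Finset.strongInduction with
  | _ W ih =>
  intro hWA μ hμ0 hμ1 hsupp hxp q hq0 hqp hqle
  rcases W.eq_empty_or_nonempty with rfl | hW
  · have hconst : ∀ S : Finset V, μ S * f (A ∪ S) = μ S * f A := by
      intro S
      by_cases h : μ S = 0
      · rw [h, zero_mul, zero_mul]
      · rw [Finset.subset_empty.mp (hsupp S h), Finset.union_empty]
    rw [Finset.sum_congr rfl (fun S _ => hconst S), ← Finset.sum_mul, hμ1, one_mul,
      Finset.union_empty]
    nlinarith [hf_nonneg A]
  · obtain ⟨e, heW, hmin⟩ := Finset.exists_min_image W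
      (fun e => ∑ S ∈ Finset.univ.filter (fun S : Finset V => e ∈ S), μ S) hW
    have heA : e ∉ A := by
      have := hWA heW; simpa [Finset.mem_compl] using this
    set m : ℝ := ∑ S ∈ Finset.univ.filter (fun S : Finset V => e ∈ S), μ S with hm
    have hm0 : 0 ≤ m := Finset.sum_nonneg fun S _ => hμ0 S
    have hmp : m ≤ p := hxp e heW
    have hqm : q ≤ m := hqle e heW
    set δ : ℝ := f (A ∪ W) - f (A ∪ W.erase e) with hδ
    -- pointwise submodularity inequality
    have key : ∀ T : Finset V, T ⊆ W.erase e → f (A ∪ T) + δ ≤ f (A ∪ insert e T) := by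
      intro T hT
      have heY : e ∉ A ∪ W.erase e := by
        simp [Finset.mem_union, heA, Finset.mem_erase]
      have hXY : A ∪ T ⊆ A ∪ W.erase e := Finset.union_subset_union_right hT
      have := hf_submod (A ∪ T) (A ∪ W.erase e) hXY e heY
      rw [← Finset.union_insert, ← Finset.union_insert, Finset.insert_erase heW] at this
      simp only [hδ]; linarith
    -- pushforward distribution
    set ν : Finset V → ℝ := fun T => if e ∈ T then 0 else μ T + μ (insert e T) with hν
    have hν0 : ∀ T, 0 ≤ ν T := by
      intro T; simp only [hν]
      split
      · exact le_refl 0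
      · exact add_nonneg (hμ0 _) (hμ0 _)
    have hν1 : ∑ T : Finset V, ν T = 1 := by
      rw [pair_sum e ν, ← hμ1, pair_sum e μ]
      refine Finset.sum_congr rfl fun T hT => ?_
      have heT : e ∉ T := by simpa using hT
      simp [hν, heT]
    have hνsupp : ∀ T, ν T ≠ 0 → T ⊆ W.erase e := by
      intro T h
      by_cases heT : e ∈ T
      · simp [hν, heT] at h
      · rw [Finset.subset_erase]
        refine ⟨?_, heT⟩
        simp only [hν, if_neg heT] at h
        by_cases h1 : μ T = 0
        · have h2 : μ (insert e T) ≠ 0 := fun h2 => h (by rw [h1, h2, add_zero])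
          exact (Finset.subset_insert e T).trans (hsupp _ h2)
        · exact hsupp T h1
    have hνmarg : ∀ e' ∈ W.erase e,
        (∑ S ∈ Finset.univ.filter (fun S : Finset V => e' ∈ S), ν S)
          = ∑ S ∈ Finset.univ.filter (fun S : Finset V => e' ∈ S), μ S := by
      intro e' he'
      have hee' : e' ≠ e := (Finset.mem_erase.mp he').1
      rw [Finset.sum_filter, Finset.sum_filter,
        pair_sum e (fun S => if e' ∈ S then ν S else 0),
        pair_sum e (fun S => if e' ∈ S then μ S else 0)]
      refine Finset.sum_congr rfl fun T hT => ?_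
      have heT : e ∉ T := by simpa using hT
      have hins : e' ∈ insert e T ↔ e' ∈ T := by simp [Finset.mem_insert, hee']
      by_cases h' : e' ∈ T
      · simp [hν, heT, h', hins]
      · simp [hν, heT, h', hins]
    have hmsum : m = ∑ T ∈ Finset.univ.filter (fun T : Finset V => e ∉ T), μ (insert e T) := by
      rw [hm, Finset.sum_filter, pair_sum e (fun S => if e ∈ S then μ S else 0)]
      refine Finset.sum_congr rfl fun T hT => ?_
      have heT : e ∉ T := by simpa using hT
      simp [heT]
    -- step 1 : ∑ ν f(A∪T) + m δ ≤ ∑ μ f(A∪S)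
    have step1 : ∑ T : Finset V, ν T * f (A ∪ T) + m * δ ≤ ∑ S : Finset V, μ S * f (A ∪ S) := by
      rw [pair_sum e (fun S => μ S * f (A ∪ S)), pair_sum e (fun T => ν T * f (A ∪ T)),
        hmsum, Finset.sum_mul, ← Finset.sum_add_distrib]
      refine Finset.sum_le_sum fun T hT => ?_
      have heT : e ∉ T := by simpa using hT
      have hνT : ν T = μ T + μ (insert e T) := by simp [hν, heT]
      have hνiT : ν (insert e T) = 0 := by simp [hν]
      rw [hνT, hνiT, zero_mul, add_zero]
      rcases eq_or_lt_of_le (hμ0 (insert e T)) with h0 | h0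
      · rw [← h0]; ring_nf; exact le_refl _
      · have hTsub : T ⊆ W.erase e := by
          rw [Finset.subset_erase]
          exact ⟨(Finset.subset_insert e T).trans (hsupp _ (ne_of_gt h0)), heT⟩
        have := mul_le_mul_of_nonneg_left (key T hTsub) (le_of_lt h0)
        nlinarith
    -- step 2 : induction hypothesis
    have step2 : (1 - p) * f A + m * f (A ∪ W.erase e) ≤ ∑ T : Finset V, ν T * f (A ∪ T) := by
      refine ih (W.erase e) (Finset.erase_ssubset heW) ((Finset.erase_subset e W).trans hWA)
        ν hν0 hν1 hνsupp ?_ m hm0 hmp ?_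
      · intro e' he'
        rw [hνmarg e' he']
        exact hxp e' (Finset.mem_erase.mp he').2
      · intro e' he'
        rw [hνmarg e' he']
        exact hmin e' (Finset.mem_erase.mp he').2
    have hfW : 0 ≤ f (A ∪ W) := hf_nonneg _
    nlinarith [step1, step2]

theorem stmt_1 {V : Type*} [Fintype V] [DecidableEq V]
    (f : Finset V → ℝ)
    (hf_nonneg : ∀ S : Finset V, 0 ≤ f S)
    (hf_submod : ∀ X Y : Finset V, X ⊆ Y → ∀ e ∉ Y,
      f (insert e Y) - f Y ≤ f (insert e X) - f X)
    (A : Finset V)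
    (μ : Finset V → ℝ)
    (hμ_nonneg : ∀ S : Finset V, 0 ≤ μ S)
    (hμ_sum : ∑ S : Finset V, μ S = 1)
    (hμ_supp : ∀ S : Finset V, μ S ≠ 0 → S ⊆ Aᶜ)
    (p : ℝ) (hp0 : 0 ≤ p) (hp1 : p ≤ 1)
    (hmarg : ∀ e ∈ Aᶜ, ∑ S ∈ Finset.univ.filter (fun S : Finset V => e ∈ S), μ S ≤ p) :
    (1 - p) * f A ≤ ∑ S : Finset V, μ S * f (A ∪ S) := by
  have h := aux_main f hf_nonneg hf_submod A p hp0 Aᶜ (subset_refl _) μ hμ_nonneg hμ_sum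
    hμ_supp hmarg 0 le_rfl hp0 (fun e _ => Finset.sum_nonneg fun S _ => hμ_nonneg S)
  rw [zero_mul, add_zero] at h
  exact h
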